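/- Let ñ, m, k̃ ∈ ℕ with m·k̃ ≤ ñ and suppose there exists an impartial and α̃-optimal (ñ, m, k̃)-assignment mechanism. Then for all k, n ∈ ℕ with k̃ ≤ k, n ≤ ñ, k < n, and m·k ≤ n, there exists an impartial and α-optimal (n, m, k)-assignment mechanism with α = (k̃/k)·α̃. -/

import Mathlib

open Finset

/-- A valid weight matrix: nonnegative entries and zero diagonal. -/
def IsValidMatrix {n : ℕ} (A : Matrix (Fin n) (Fin n) ℝ) : Prop :=
  (∀ i j, 0 ≤ A i j) ∧ ∀ i, A i i = 0

/-- Score of a subset `S` of agents under weight matrix `A`. -/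
def score {n : ℕ} (A : Matrix (Fin n) (Fin n) ℝ) (S : Finset (Fin n)) : ℝ :=
  ∑ i : Fin n, ∑ j ∈ S, A i j

/-- A feasible assignment: `m` pairwise disjoint sets of agents, each of
cardinality at most `k`. -/
def FeasibleAssignment {n : ℕ} (m k : ℕ) (X : Fin m → Finset (Fin n)) : Prop :=
  (∀ ℓ, (X ℓ).card ≤ k) ∧ ∀ ℓ ℓ', ℓ ≠ ℓ' → Disjoint (X ℓ) (X ℓ')

/-- Total score of an assignment: the sum over the jobs of the score of the set
assigned to each job. -/
def totalScore {n m : ℕ} (A : Fin m → Matrix (Fin n) (Fin n) ℝ)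
    (X : Fin m → Finset (Fin n)) : ℝ :=
  ∑ ℓ, score (A ℓ) (X ℓ)

/-- The maximum total score over all feasible assignments with capacity `k`. -/
noncomputable def optAssign {n : ℕ} (m k : ℕ)
    (A : Fin m → Matrix (Fin n) (Fin n) ℝ) : ℝ :=
  sSup {x : ℝ | ∃ X : Fin m → Finset (Fin n),
    FeasibleAssignment m k X ∧ totalScore A X = x}

/-- Impartiality of an `(n,m,k)`-assignment mechanism. -/
def ImpartialAssign {n m : ℕ}
    (f : (Fin m → Matrix (Fin n) (Fin n) ℝ) → (Fin m → Finset (Fin n))) : Prop :=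
  ∀ A A' : Fin m → Matrix (Fin n) (Fin n) ℝ,
    (∀ ℓ, IsValidMatrix (A ℓ)) → (∀ ℓ, IsValidMatrix (A' ℓ)) →
    ∀ i : Fin n, (∀ ℓ, ∀ i', i' ≠ i → A ℓ i' = A' ℓ i') →
      ∀ ℓ, (i ∈ f A ℓ ↔ i ∈ f A' ℓ)

/-- `α`-optimality of an `(n,m,k)`-assignment mechanism. -/
def AlphaOptimalAssign {n m : ℕ} (k : ℕ)
    (f : (Fin m → Matrix (Fin n) (Fin n) ℝ) → (Fin m → Finset (Fin n)))
    (α : ℝ) : Prop :=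
  ∀ A : Fin m → Matrix (Fin n) (Fin n) ℝ, (∀ ℓ, IsValidMatrix (A ℓ)) →
    α * optAssign m k A ≤ totalScore A (f A)



lemma sum_eq_sum_castLE {n N : ℕ} (hn : n ≤ N) (f : Fin N → ℝ)
    (hf : ∀ i : Fin N, ¬ i.1 < n → f i = 0) :
    ∑ i : Fin N, f i = ∑ i : Fin n, f (Fin.castLE hn i) := by
  classical
  have h2 : ∑ i : Fin n, f (Fin.castLE hn i)
      = ∑ i ∈ Finset.univ.map ⟨Fin.castLE hn, Fin.castLE_injective hn⟩, f i := by
    rw [Finset.sum_map]; rfl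
  rw [h2]
  refine (Finset.sum_subset (Finset.subset_univ _) ?_).symm
  intro i _ hi
  refine hf i fun h => hi ?_
  exact Finset.mem_map.2 ⟨⟨i.1, h⟩, Finset.mem_univ _, rfl⟩

def extMat {n N : ℕ} (A : Matrix (Fin n) (Fin n) ℝ) : Matrix (Fin N) (Fin N) ℝ :=
  fun i j => if h : i.1 < n ∧ j.1 < n then A ⟨i.1, h.1⟩ ⟨j.1, h.2⟩ else 0

lemma extMat_valid {n N : ℕ} {A : Matrix (Fin n) (Fin n) ℝ} (hA : IsValidMatrix A) :
    IsValidMatrix (extMat (N := N) A) := by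
  refine ⟨fun i j => ?_, fun i => ?_⟩
  · unfold extMat
    split
    · exact hA.1 _ _
    · exact le_refl 0
  · unfold extMat
    split
    · exact hA.2 _
    · rfl

lemma score_comm {n : ℕ} (A : Matrix (Fin n) (Fin n) ℝ) (S : Finset (Fin n)) :
    score A S = ∑ j ∈ S, ∑ i : Fin n, A i j := Finset.sum_comm

lemma score_extMat {n N : ℕ} (hn : n ≤ N) (A : Matrix (Fin n) (Fin n) ℝ)
    (S : Finset (Fin N)) :
    score (extMat A) S
      = score A (Finset.univ.filter fun i : Fin n => Fin.castLE hn i ∈ S) := by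
  classical
  rw [score_comm, score_comm]
  have hz : ∀ j ∈ S, (∑ i : Fin N, extMat (n := n) A i j) ≠ 0 → j.1 < n := by
    intro j _ hne
    by_contra hj
    exact hne (Finset.sum_eq_zero fun i _ => by simp [extMat, hj])
  rw [← Finset.sum_filter_of_ne hz]
  have hfe : S.filter (fun j => j.1 < n)
      = (Finset.univ.filter fun i : Fin n => Fin.castLE hn i ∈ S).map
          ⟨Fin.castLE hn, Fin.castLE_injective hn⟩ := by
    ext j
    simp only [Finset.mem_filter, Finset.mem_map, Finset.mem_univ, true_and,
      Function.Embedding.coeFn_mk]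
    constructor
    · rintro ⟨hjS, hjn⟩
      exact ⟨⟨j.1, hjn⟩, hjS, rfl⟩
    · rintro ⟨i, hiS, rfl⟩
      exact ⟨hiS, i.2⟩
  rw [hfe, Finset.sum_map]
  refine Finset.sum_congr rfl ?_
  intro i _
  simp only [Function.Embedding.coeFn_mk]
  rw [sum_eq_sum_castLE hn]
  · refine Finset.sum_congr rfl fun i' _ => ?_
    show extMat A (Fin.castLE hn i') (Fin.castLE hn i) = A i' i
    unfold extMat
    rw [dif_pos ⟨i'.2, i.2⟩]; rfl
  · intro i' hi'
    simp [extMat, hi']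

lemma exists_top_subset {ι : Type*} [DecidableEq ι] (w : ι → ℝ) (hw : ∀ x, 0 ≤ w x) :
    ∀ (d : ℕ) (S : Finset ι) (t : ℕ), S.card = t + d →
    ∃ T ⊆ S, T.card = t ∧ (t : ℝ) * ∑ x ∈ S, w x ≤ (S.card : ℝ) * ∑ x ∈ T, w x := by
  intro d
  induction d with
  | zero =>
    intro S t ht
    exact ⟨S, Finset.Subset.refl S, by omega, le_of_eq (by rw [ht, Nat.add_zero])⟩
  | succ d ih =>
    intro S t ht
    have hSne : S.Nonempty := Finset.card_pos.1 (by omega)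
    obtain ⟨x, hxS, hxmin⟩ := Finset.exists_min_image S w hSne
    have hcard : (S.erase x).card = t + d := by
      rw [Finset.card_erase_of_mem hxS]; omega
    obtain ⟨T, hTsub, hTcard, hT⟩ := ih (S.erase x) t hcard
    refine ⟨T, hTsub.trans (Finset.erase_subset x S), hTcard, ?_⟩
    have hsplit : ∑ y ∈ S, w y = w x + ∑ y ∈ S.erase x, w y :=
      (Finset.add_sum_erase S w hxS).symm
    have havg : (S.card : ℝ) * w x ≤ ∑ y ∈ S, w y := by
      have := Finset.card_nsmul_le_sum S w (w x) hxmin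
      simpa [nsmul_eq_mul] using this
    have hTnn : 0 ≤ ∑ y ∈ T, w y := Finset.sum_nonneg fun y _ => hw y
    have hSnn : 0 ≤ ∑ y ∈ S, w y := Finset.sum_nonneg fun y _ => hw y
    rw [hcard] at hT
    rw [ht]
    rcases Nat.eq_zero_or_pos t with ht0 | htpos
    · subst ht0
      simp only [Nat.cast_zero, zero_mul]
      positivity
    · have hc : (S.card : ℝ) = (t:ℝ) + d + 1 := by rw [ht]; push_cast; ring
      rw [hc] at havg
      push_cast at hT ⊢
      have h1 : (t:ℝ) * (∑ y ∈ S, w y - w x) ≤ ((t:ℝ) + d) * ∑ y ∈ T, w y := by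
        have : ∑ y ∈ S.erase x, w y = ∑ y ∈ S, w y - w x := by linarith
        rw [← this]; exact hT
      have h2 : ((t:ℝ) + d) * ((t:ℝ) * ∑ y ∈ S, w y)
          ≤ ((t:ℝ) + d) * (((t:ℝ) + d + 1) * ∑ y ∈ T, w y) := by
        nlinarith [mul_le_mul_of_nonneg_left h1 (show (0:ℝ) ≤ (t:ℝ) + d + 1 by positivity),
          mul_le_mul_of_nonneg_left havg (show (0:ℝ) ≤ (t:ℝ) by positivity)]
      have hpos : (0:ℝ) < (t:ℝ) + d := by
        have : (1:ℝ) ≤ (t:ℝ) := by exact_mod_cast htpos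
        linarith [Nat.cast_nonneg (α := ℝ) d]
      have h3 := (mul_le_mul_iff_right₀ hpos).mp h2
      linarith

lemma exists_top_le {ι : Type*} [DecidableEq ι] (w : ι → ℝ) (hw : ∀ x, 0 ≤ w x)
    (S : Finset ι) (k ktil : ℕ) (hS : S.card ≤ k) (hkk : ktil ≤ k) :
    ∃ T ⊆ S, T.card ≤ ktil ∧ (ktil : ℝ) * ∑ x ∈ S, w x ≤ (k : ℝ) * ∑ x ∈ T, w x := by
  obtain ⟨T, hTsub, hTcard, hT⟩ :=
    exists_top_subset w hw (S.card - min ktil S.card) S (min ktil S.card) (by omega)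
  have hTnn : 0 ≤ ∑ y ∈ T, w y := Finset.sum_nonneg fun y _ => hw y
  have hSnn : 0 ≤ ∑ y ∈ S, w y := Finset.sum_nonneg fun y _ => hw y
  refine ⟨T, hTsub, by omega, ?_⟩
  rcases le_or_gt ktil S.card with h | h
  · rw [min_eq_left h] at hT
    calc (ktil : ℝ) * ∑ x ∈ S, w x ≤ (S.card : ℝ) * ∑ x ∈ T, w x := hT
      _ ≤ (k : ℝ) * ∑ x ∈ T, w x :=
          mul_le_mul_of_nonneg_right (by exact_mod_cast hS) hTnn
  · rw [min_eq_right h.le] at hT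
    rcases Nat.eq_zero_or_pos S.card with h0 | hpos
    · have : S = ∅ := Finset.card_eq_zero.1 h0
      subst this
      simp only [Finset.sum_empty, mul_zero]
      positivity
    · have hST : ∑ x ∈ S, w x ≤ ∑ x ∈ T, w x := by
        have hcpos : (0:ℝ) < (S.card : ℝ) := by exact_mod_cast hpos
        exact le_of_mul_le_mul_left hT hcpos
      calc (ktil : ℝ) * ∑ x ∈ S, w x ≤ (k : ℝ) * ∑ x ∈ T, w x := by
            refine mul_le_mul (by exact_mod_cast hkk) hST hSnn (by positivity)

-- opt machinery

lemma optSet_eq {n m k : ℕ} (A : Fin m → Matrix (Fin n) (Fin n) ℝ) :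
    {x : ℝ | ∃ X : Fin m → Finset (Fin n), FeasibleAssignment m k X ∧ totalScore A X = x}
      = totalScore A '' {X | FeasibleAssignment m k X} := by
  ext x
  simp [Set.mem_image]

lemma optAssign_bddAbove {n m : ℕ} (k : ℕ) (A : Fin m → Matrix (Fin n) (Fin n) ℝ) :
    BddAbove {x : ℝ | ∃ X : Fin m → Finset (Fin n),
      FeasibleAssignment m k X ∧ totalScore A X = x} := by
  rw [optSet_eq]
  exact ((Set.toFinite _).image _).bddAbove

lemma feasible_empty {n m k : ℕ} :
    FeasibleAssignment (n := n) m k (fun _ => ∅) :=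
  ⟨fun _ => by simp, fun _ _ _ => by simp⟩

lemma totalScore_empty {n m : ℕ} (A : Fin m → Matrix (Fin n) (Fin n) ℝ) :
    totalScore A (fun _ => ∅) = 0 := by
  simp [totalScore, score]

lemma le_optAssign {n m k : ℕ} {A : Fin m → Matrix (Fin n) (Fin n) ℝ}
    {X : Fin m → Finset (Fin n)} (hX : FeasibleAssignment m k X) :
    totalScore A X ≤ optAssign m k A :=
  le_csSup (optAssign_bddAbove k A) ⟨X, hX, rfl⟩

lemma optAssign_nonneg {n m : ℕ} (k : ℕ) (A : Fin m → Matrix (Fin n) (Fin n) ℝ) :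
    0 ≤ optAssign m k A := by
  have := le_optAssign (A := A) (feasible_empty (n := n) (m := m) (k := k))
  rwa [totalScore_empty] at this

lemma exists_optAssign {n m : ℕ} (k : ℕ) (A : Fin m → Matrix (Fin n) (Fin n) ℝ) :
    ∃ X : Fin m → Finset (Fin n),
      FeasibleAssignment m k X ∧ totalScore A X = optAssign m k A := by
  have hne : {x : ℝ | ∃ X : Fin m → Finset (Fin n),
      FeasibleAssignment m k X ∧ totalScore A X = x}.Nonempty :=
    ⟨_, ⟨fun _ => ∅, feasible_empty, rfl⟩⟩
  have hfin : {x : ℝ | ∃ X : Fin m → Finset (Fin n),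
      FeasibleAssignment m k X ∧ totalScore A X = x}.Finite := by
    rw [optSet_eq]
    exact (Set.toFinite _).image _
  exact hne.csSup_mem hfin

/-- Generalization lemma for assignments: an impartial `α̃`-optimal
`(ñ,m,k̃)`-assignment mechanism with `m·k̃ ≤ ñ` yields, for every `k, n` with
`k̃ ≤ k`, `n ≤ ñ`, `k < n` and `m·k ≤ n`, an impartial `(k̃/k)·α̃`-optimal
`(n,m,k)`-assignment mechanism. -/
theorem stmt16 (ntil m ktil : ℕ) (hmk : m * ktil ≤ ntil) (αtil : ℝ)
    (hex : ∃ g : (Fin m → Matrix (Fin ntil) (Fin ntil) ℝ) → (Fin m → Finset (Fin ntil)),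
      (∀ A, FeasibleAssignment m ktil (g A)) ∧ ImpartialAssign g ∧
      AlphaOptimalAssign ktil g αtil) :
    ∀ k n : ℕ, ktil ≤ k → n ≤ ntil → k < n → m * k ≤ n →
    ∃ f : (Fin m → Matrix (Fin n) (Fin n) ℝ) → (Fin m → Finset (Fin n)),
      (∀ A, FeasibleAssignment m k (f A)) ∧ ImpartialAssign f ∧
      AlphaOptimalAssign k f (((ktil : ℝ) / (k : ℝ)) * αtil) := by
  intro k n hkk hn hkn hmkn
  classical
  by_cases hα : (ktil : ℝ) / (k : ℝ) * αtil ≤ 0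
  · refine ⟨fun _ _ => ∅, fun _ => feasible_empty, ?_, ?_⟩
    · intro A A' _ _ i _ ℓ; exact Iff.rfl
    · intro A hA
      rw [totalScore_empty]
      exact mul_nonpos_iff.2 (Or.inr ⟨hα, optAssign_nonneg k A⟩)
  · push_neg at hα
    obtain ⟨g, hgfeas, hgimp, hgopt⟩ := hex
    have hk0 : (0:ℝ) < (k:ℝ) := by
      by_contra h
      push_neg at h
      have hz : (k:ℝ) = 0 := le_antisymm h (by positivity)
      rw [hz, div_zero, zero_mul] at hα
      exact lt_irrefl _ hα
    have hαt : 0 < αtil := by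
      by_contra h
      push_neg at h
      have : (ktil:ℝ)/(k:ℝ) * αtil ≤ 0 :=
        mul_nonpos_iff.2 (Or.inl ⟨by positivity, h⟩)
      linarith
    refine ⟨fun A ℓ => Finset.univ.filter
        (fun i : Fin n => Fin.castLE hn i ∈ g (fun ℓ' => extMat (A ℓ')) ℓ), ?_, ?_, ?_⟩
    · intro A
      constructor
      · intro ℓ
        have hcard : ((Finset.univ.filter
            (fun i : Fin n => Fin.castLE hn i ∈ g (fun ℓ' => extMat (A ℓ')) ℓ)).card)
            ≤ (g (fun ℓ' => extMat (A ℓ')) ℓ).card :=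
          Finset.card_le_card_of_injOn (Fin.castLE hn)
            (fun i hi => (Finset.mem_filter.1 hi).2)
            ((Fin.castLE_injective hn).injOn)
        exact hcard.trans (((hgfeas _).1 ℓ).trans hkk)
      · intro ℓ ℓ' hne
        rw [Finset.disjoint_left]
        intro i hi hi'
        exact (Finset.disjoint_left.1 ((hgfeas _).2 ℓ ℓ' hne))
          (Finset.mem_filter.1 hi).2 (Finset.mem_filter.1 hi').2
    · intro A A' hA hA' i hrow ℓ
      have hval : ∀ ℓ', IsValidMatrix (extMat (N := ntil) (A ℓ')) :=
        fun ℓ' => extMat_valid (hA ℓ')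
      have hval' : ∀ ℓ', IsValidMatrix (extMat (N := ntil) (A' ℓ')) :=
        fun ℓ' => extMat_valid (hA' ℓ')
      have hrow' : ∀ ℓ', ∀ i' : Fin ntil, i' ≠ Fin.castLE hn i →
          extMat (A ℓ') i' = extMat (A' ℓ') i' := by
        intro ℓ' i' hi'
        funext j
        unfold extMat
        split
        · next h =>
          have hne : (⟨i'.1, h.1⟩ : Fin n) ≠ i := by
            intro he
            apply hi'
            apply Fin.ext
            simpa using congrArg Fin.val he
          exact congrFun (hrow ℓ' ⟨i'.1, h.1⟩ hne) ⟨j.1, h.2⟩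
        · rfl
      have hmem := hgimp _ _ hval hval' (Fin.castLE hn i) hrow' ℓ
      simp only [Finset.mem_filter, Finset.mem_univ, true_and]
      exact hmem
    · intro A hA
      set Abar := fun ℓ' => extMat (N := ntil) (A ℓ') with hAbar
      have hAbarval : ∀ ℓ', IsValidMatrix (Abar ℓ') := fun ℓ' => extMat_valid (hA ℓ')
      have htot : totalScore Abar (g Abar)
          = totalScore A (fun ℓ => Finset.univ.filter
              (fun i : Fin n => Fin.castLE hn i ∈ g Abar ℓ)) := by
        unfold totalScore
        exact Finset.sum_congr rfl fun ℓ _ => score_extMat hn (A ℓ) (g Abar ℓ)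
      obtain ⟨X, hXfeas, hXopt⟩ := exists_optAssign k A
      have hch : ∀ ℓ, ∃ T ⊆ X ℓ, T.card ≤ ktil ∧
          (ktil:ℝ) * ∑ j ∈ X ℓ, ∑ i : Fin n, A ℓ i j
            ≤ (k:ℝ) * ∑ j ∈ T, ∑ i : Fin n, A ℓ i j := fun ℓ =>
        exists_top_le _ (fun j => Finset.sum_nonneg fun i _ => (hA ℓ).1 i j)
          (X ℓ) k ktil (hXfeas.1 ℓ) hkk
      choose T hTsub hTcard hTle using hch
      set Y := fun ℓ => (T ℓ).map ⟨Fin.castLE hn, Fin.castLE_injective hn⟩ with hY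
      have hYfeas : FeasibleAssignment m ktil Y := by
        constructor
        · intro ℓ
          rw [hY]
          rw [Finset.card_map]
          exact hTcard ℓ
        · intro ℓ ℓ' hne
          rw [hY]
          simp only [Finset.disjoint_map]
          exact Finset.disjoint_of_subset_left (hTsub ℓ)
            (Finset.disjoint_of_subset_right (hTsub ℓ') (hXfeas.2 ℓ ℓ' hne))
      have hscoreY : ∀ ℓ, score (Abar ℓ) (Y ℓ) = score (A ℓ) (T ℓ) := by
        intro ℓ
        rw [hAbar, score_extMat hn]
        congr 1
        ext i
        simp [hY]
      have hkey : (ktil:ℝ) * totalScore A X ≤ (k:ℝ) * totalScore Abar Y := by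
        unfold totalScore
        rw [Finset.mul_sum, Finset.mul_sum]
        refine Finset.sum_le_sum fun ℓ _ => ?_
        rw [hscoreY ℓ, score_comm, score_comm]
        exact hTle ℓ
      have hYopt : totalScore Abar Y ≤ optAssign m ktil Abar := le_optAssign hYfeas
      have hopt : (ktil:ℝ)/(k:ℝ) * optAssign m k A ≤ optAssign m ktil Abar := by
        rw [div_mul_eq_mul_div, div_le_iff₀ hk0, ← hXopt]
        calc (ktil:ℝ) * totalScore A X ≤ (k:ℝ) * totalScore Abar Y := hkey
          _ ≤ (k:ℝ) * optAssign m ktil Abar :=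
              mul_le_mul_of_nonneg_left hYopt hk0.le
          _ = optAssign m ktil Abar * (k:ℝ) := mul_comm _ _
      calc ((ktil:ℝ)/(k:ℝ) * αtil) * optAssign m k A
          = αtil * ((ktil:ℝ)/(k:ℝ) * optAssign m k A) := by ring
        _ ≤ αtil * optAssign m ktil Abar := mul_le_mul_of_nonneg_left hopt hαt.le
        _ ≤ totalScore Abar (g Abar) := hgopt Abar hAbarval
        _ = _ := htot
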